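/- (Definiteness of the stabilized norm on a reference configuration.) Let d ≥ 1, P ∈ ℕ₀, let Q̂ := (0,1)^d, and let Q̂' := Q̂ + z for some z ∈ {−1,0,1}^d with z ≠ 0 (so that clos Q̂ and clos Q̂' share at least one vertex). Let v be an element of the PUFEM space V_σ^P with σ = 1. If v ≡ 0 on Q̂' and ∂^α v ≡ 0 on Q̂ for every multi-index α with |α| = P+1, then v ≡ 0 on Q̂. -/

import Mathlib

open MeasureTheory Finset

noncomputable section

/-- Normalization constant of the one-dimensional Friedrichs mollifier. -/
def mollK : ℝ := ∫ t in Set.Ioo (-(1/2) : ℝ) (1/2), Real.exp (-(1 - 4 * t ^ 2)⁻¹)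

/-- One-dimensional Friedrichs mollifier. -/
def zeta1 (t : ℝ) : ℝ := if |t| < 1/2 then Real.exp (-(1 - 4 * t ^ 2)⁻¹) / mollK else 0

/-- `d`-dimensional Friedrichs mollifier (tensor product). -/
def zetaD (d : ℕ) (x : Fin d → ℝ) : ℝ := ∏ j, zeta1 (x j)

/-- Scaled mollifier ζ_σ. -/
def zetaScaled (d : ℕ) (σ : ℝ) (x : Fin d → ℝ) : ℝ := (σ ^ d)⁻¹ * zetaD d fun j => x j / σ

/-- The patch Ω_i. -/
def patch (d : ℕ) (σ : ℝ) (i : Fin d → ℤ) : Set (Fin d → ℝ) :=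
  Set.univ.pi fun j => Set.Ioo (((i j : ℝ) - 1) * σ) (((i j : ℝ) + 1) * σ)

/-- The patch core ω_i. -/
def patchCore (d : ℕ) (σ : ℝ) (i : Fin d → ℤ) : Set (Fin d → ℝ) :=
  Set.univ.pi fun j => Set.Ioo (((i j : ℝ) - 1/2) * σ) (((i j : ℝ) + 1/2) * σ)

/-- The element Q_i. -/
def element (d : ℕ) (σ : ℝ) (i : Fin d → ℤ) : Set (Fin d → ℝ) :=
  Set.univ.pi fun j => Set.Ioo ((i j : ℝ) * σ) (((i j : ℝ) + 1) * σ)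

/-- The partition of unity function φ_i = χ_{ω_i} ⋆ ζ_σ. -/
def pufun (d : ℕ) (σ : ℝ) (i : Fin d → ℤ) (x : Fin d → ℝ) : ℝ :=
  ∫ y in patchCore d σ i, zetaScaled d σ (x - y)

/-- Multi-index partial derivative ∂^α f. -/
def pdiff (d : ℕ) (α : Fin d → ℕ) (f : (Fin d → ℝ) → ℝ) (x : Fin d → ℝ) : ℝ :=
  iteratedFDeriv ℝ (∑ j, α j) f x fun m =>
    Pi.single (((Fintype.equivFinOfCardEq
      (by simp : Fintype.card ((j : Fin d) × Fin (α j)) = ∑ j, α j)).symm m).1) (1 : ℝ)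

/-- A PUFEM function with coefficients `c`. -/
def pufemFun (d P : ℕ) (σ : ℝ) (c : (Fin d → ℤ) → (Fin d → ℕ) → ℝ) : (Fin d → ℝ) → ℝ :=
  fun x => ∑' i : Fin d → ℤ, pufun d σ i x *
    ∑ n ∈ Finset.range (P + 1), ∑ α ∈ Finset.Nat.antidiagonalTuple d n,
      c i α * ∏ j, ((x j - (i j : ℝ) * σ) / σ) ^ α j

/-- Membership in the PUFEM space V_σ^P. -/
def memPufem (d P : ℕ) (σ : ℝ) (v : (Fin d → ℝ) → ℝ) : Prop :=
  ∃ c, v = pufemFun d P σ c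

/-- Membership in V_σ^P(S): only basis functions whose support meets S are used. -/
def memPufemOn (d P : ℕ) (σ : ℝ) (S : Set (Fin d → ℝ)) (v : (Fin d → ℝ) → ℝ) : Prop :=
  ∃ c, (∀ i : Fin d → ℤ, ¬(closure (patch d σ i) ∩ S).Nonempty → ∀ α, c i α = 0) ∧
    v = pufemFun d P σ c

/-- Squared L² norm over D. -/
def l2Sq (d : ℕ) (f : (Fin d → ℝ) → ℝ) (D : Set (Fin d → ℝ)) : ℝ := ∫ x in D, (f x) ^ 2

/-- Squared Sobolev seminorm |f|²_{W^{k,2}(D)}. -/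
def semiSq (d k : ℕ) (f : (Fin d → ℝ) → ℝ) (D : Set (Fin d → ℝ)) : ℝ :=
  ∑ α ∈ Finset.Nat.antidiagonalTuple d k, ∫ x in D, (pdiff d α f x) ^ 2

/-- Squared Sobolev norm ‖f‖²_{W^{k,2}(D)}. -/
def sobSq (d k : ℕ) (f : (Fin d → ℝ) → ℝ) (D : Set (Fin d → ℝ)) : ℝ :=
  ∑ n ∈ Finset.range (k + 1), semiSq d n f D

def sobNorm (d k : ℕ) (f : (Fin d → ℝ) → ℝ) (D : Set (Fin d → ℝ)) : ℝ :=
  Real.sqrt (sobSq d k f D)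

/-- W^{k,1} seminorm. -/
def w1Semi (d k : ℕ) (f : (Fin d → ℝ) → ℝ) (D : Set (Fin d → ℝ)) : ℝ :=
  ∑ α ∈ Finset.Nat.antidiagonalTuple d k, ∫ x in D, |pdiff d α f x|

/-- All partial derivatives up to order k are square integrable on D. -/
def sobFinite (d k : ℕ) (f : (Fin d → ℝ) → ℝ) (D : Set (Fin d → ℝ)) : Prop :=
  ∀ n ≤ k, ∀ α ∈ Finset.Nat.antidiagonalTuple d n,
    MeasureTheory.IntegrableOn (fun x => (pdiff d α f x) ^ 2) D

/-- Indices of elements meeting Ω (in positive measure). -/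
def elemIdx (d : ℕ) (σ : ℝ) (Ω : Set (Fin d → ℝ)) : Set (Fin d → ℤ) :=
  {i | 0 < volume (element d σ i ∩ Ω)}

/-- Indices of cut elements. -/
def cutIdx (d : ℕ) (σ : ℝ) (Ω : Set (Fin d → ℝ)) : Set (Fin d → ℤ) :=
  {i | i ∈ elemIdx d σ Ω ∧ ¬element d σ i ⊆ Ω}

/-- Indices of uncut elements. -/
def uncutIdx (d : ℕ) (σ : ℝ) (Ω : Set (Fin d → ℝ)) : Set (Fin d → ℤ) :=
  {i | i ∈ elemIdx d σ Ω ∧ element d σ i ⊆ Ω}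

/-- The fictitious domain Ω_σ. -/
def fictDom (d : ℕ) (σ : ℝ) (Ω : Set (Fin d → ℝ)) : Set (Fin d → ℝ) :=
  interior (⋃ i ∈ elemIdx d σ Ω, closure (element d σ i))

/-- The cut region Ω_σ^Γ. -/
def cutRegion (d : ℕ) (σ : ℝ) (Ω : Set (Fin d → ℝ)) : Set (Fin d → ℝ) :=
  interior (⋃ i ∈ cutIdx d σ Ω, closure (element d σ i))

/-- The uncut region Ω_σ^∘. -/
def uncutRegion (d : ℕ) (σ : ℝ) (Ω : Set (Fin d → ℝ)) : Set (Fin d → ℝ) :=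
  interior (⋃ i ∈ uncutIdx d σ Ω, closure (element d σ i))

/-- Two elements are neighbors if their closures share a grid point. -/
def neighbor (d : ℕ) (i i' : Fin d → ℤ) : Prop :=
  i ≠ i' ∧ ∀ j, |i j - i' j| ≤ 1

/-- The chain condition with constant K. -/
def chainCond (d : ℕ) (σ : ℝ) (Ω : Set (Fin d → ℝ)) (K : ℕ) : Prop :=
  ∀ i ∈ cutIdx d σ Ω, ∃ n : ℕ, n + 1 ≤ K ∧ ∃ q : Fin (n + 1) → Fin d → ℤ,
    q 0 = i ∧ (∀ m, q m ∈ cutIdx d σ Ω) ∧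
    (∀ m : Fin n, neighbor d (q m.castSucc) (q m.succ)) ∧
    ∃ i' ∈ uncutIdx d σ Ω, neighbor d (q (Fin.last n)) i'

/-- Ghost-penalty bilinear form. -/
def gpForm (d P : ℕ) (σ : ℝ) (Ω : Set (Fin d → ℝ)) (u v : (Fin d → ℝ) → ℝ) : ℝ :=
  σ ^ (2 * (P + 1)) * ∑ α ∈ Finset.Nat.antidiagonalTuple d (P + 1),
    ∫ x in cutRegion d σ Ω, pdiff d α u x * pdiff d α v x

/-- Stabilized bilinear form A. -/
def stabForm (d P : ℕ) (σ ε : ℝ) (Ω : Set (Fin d → ℝ)) (u v : (Fin d → ℝ) → ℝ) : ℝ :=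
  (∫ x in Ω, u x * v x) + ε * gpForm d P σ Ω u v

namespace PufemAux

variable {E F : Type*} [NormedAddCommGroup E] [NormedSpace ℝ E]
  [NormedAddCommGroup F] [NormedSpace ℝ F] {f : E → F}

lemma itfd_contDiff (hf : ContDiff ℝ (⊤ : ℕ∞) f) (n : ℕ) :
    ContDiff ℝ (⊤ : ℕ∞) (iteratedFDeriv ℝ n f) :=
  hf.iteratedFDeriv_right (by exact_mod_cast le_top)

lemma itfd_two_apply (n : ℕ) (x : E) (m : Fin (n + 2) → E) :
    iteratedFDeriv ℝ (n + 2) f x m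
      = fderiv ℝ (fderiv ℝ (iteratedFDeriv ℝ n f)) x (m 0) (m 1)
          (Fin.tail (Fin.tail m)) := by
  rw [iteratedFDeriv_succ_apply_left]
  have h1 : iteratedFDeriv ℝ (n + 1) f =
      ⇑(continuousMultilinearCurryLeftEquiv ℝ (fun _ : Fin (n + 1) => E) F).symm ∘
        fderiv ℝ (iteratedFDeriv ℝ n f) := iteratedFDeriv_succ_eq_comp_left
  have h2 := LinearIsometryEquiv.comp_fderiv (𝕜 := ℝ)
    ((continuousMultilinearCurryLeftEquiv ℝ (fun _ : Fin (n + 1) => E) F).symm)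
    (f := fderiv ℝ (iteratedFDeriv ℝ n f)) (x := x)
  rw [h1, h2]
  simp only [ContinuousLinearMap.coe_comp', Function.comp_apply,
    LinearIsometryEquiv.coe_coe, continuousMultilinearCurryLeftEquiv_symm_apply]
  rfl

lemma itfd_swap01 (hf : ContDiff ℝ (⊤ : ℕ∞) f) (n : ℕ) (x : E) (m : Fin (n + 2) → E) :
    iteratedFDeriv ℝ (n + 2) f x (m ∘ Equiv.swap 0 1) = iteratedFDeriv ℝ (n + 2) f x m := by
  have hg : ∀ y, HasFDerivAt (iteratedFDeriv ℝ n f)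
      (fderiv ℝ (iteratedFDeriv ℝ n f) y) y := fun y =>
    (((itfd_contDiff hf n).differentiable (by simp)) y).hasFDerivAt
  have hg' : HasFDerivAt (fderiv ℝ (iteratedFDeriv ℝ n f))
      (fderiv ℝ (fderiv ℝ (iteratedFDeriv ℝ n f)) x) x :=
    ((((itfd_contDiff hf n).fderiv_right (m := (⊤ : ℕ∞))
      (by exact_mod_cast le_top)).differentiable (by simp)) x).hasFDerivAt
  have hsym := second_derivative_symmetric_of_eventually_of_real
    (Filter.Eventually.of_forall hg) hg' (m 1) (m 0)
  rw [itfd_two_apply, itfd_two_apply]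
  have h0 : (m ∘ Equiv.swap 0 1) 0 = m 1 := by
    simp [Equiv.swap_apply_left]
  have h1 : (m ∘ Equiv.swap 0 1) 1 = m 0 := by
    simp [Equiv.swap_apply_right]
  have ht : Fin.tail (Fin.tail (m ∘ Equiv.swap 0 1)) = Fin.tail (Fin.tail m) := by
    funext k
    have hkne0 : (k.succ.succ : Fin (n + 2)) ≠ 0 := Fin.succ_ne_zero _
    have hkne1 : (k.succ.succ : Fin (n + 2)) ≠ 1 := by
      rw [← Fin.succ_zero_eq_one]
      exact fun h => Fin.succ_ne_zero _ (Fin.succ_injective _ h)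
    simp only [Fin.tail, Function.comp_apply]
    rw [Equiv.swap_apply_of_ne_of_ne hkne0 hkne1]
  rw [h0, h1, ht, hsym]

lemma itfd_tail_perm (n : ℕ) (σ : Equiv.Perm (Fin (n + 2))) (σ' : Equiv.Perm (Fin (n + 1)))
    (h0 : σ 0 = 0) (hsucc : ∀ i : Fin (n + 1), σ i.succ = (σ' i).succ)
    (IH : ∀ (y : E) (w : Fin (n + 1) → E),
      iteratedFDeriv ℝ (n + 1) f y (w ∘ σ') = iteratedFDeriv ℝ (n + 1) f y w)
    (hdiff : Differentiable ℝ (iteratedFDeriv ℝ (n + 1) f))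
    (x : E) (m : Fin (n + 2) → E) :
    iteratedFDeriv ℝ (n + 2) f x (m ∘ σ) = iteratedFDeriv ℝ (n + 2) f x m := by
  set g := iteratedFDeriv ℝ (n + 1) f with hgdef
  set T := ContinuousMultilinearMap.domDomCongrₗᵢ ℝ E F σ' with hTdef
  have key : ⇑T ∘ g = g := by
    funext y
    refine ContinuousMultilinearMap.ext fun w => ?_
    have : (T (g y)) w = g y (w ∘ σ') := rfl
    rw [Function.comp_apply, this, IH]
  have hfd : fderiv ℝ g x = (T.toContinuousLinearEquiv : _ →L[ℝ] _).comp (fderiv ℝ g x) := by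
    conv_lhs => rw [← key]
    exact T.comp_fderiv
  have happ : ∀ (a : E) (t : Fin (n + 1) → E),
      fderiv ℝ g x a (t ∘ σ') = fderiv ℝ g x a t := by
    intro a t
    conv_rhs => rw [hfd]
    rfl
  rw [iteratedFDeriv_succ_apply_left, iteratedFDeriv_succ_apply_left]
  have hm0 : (m ∘ σ) 0 = m 0 := by simp [h0]
  have htail : Fin.tail (m ∘ σ) = (Fin.tail m) ∘ σ' := by
    funext k
    simp only [Fin.tail, Function.comp_apply, hsucc]
  rw [hm0, htail, happ]

theorem itfd_perm (hf : ContDiff ℝ (⊤ : ℕ∞) f) :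
    ∀ (n : ℕ) (σ : Equiv.Perm (Fin n)) (x : E) (m : Fin n → E),
      iteratedFDeriv ℝ n f x (m ∘ σ) = iteratedFDeriv ℝ n f x m := by
  intro n
  induction n with
  | zero =>
    intro σ x m
    congr 1
    funext i
    exact i.elim0
  | succ k IH =>
    match k, IH with
    | 0, _ =>
      intro σ x m
      congr 1
      funext i
      have h1 := (σ i).isLt
      have h2 := i.isLt
      exact congrArg m (Fin.ext (by omega))
    | (k + 1), IH =>
      have hdiff : Differentiable ℝ (iteratedFDeriv ℝ (k + 1) f) :=
        (itfd_contDiff hf (k + 1)).differentiable (by simp)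
      set P : Equiv.Perm (Fin (k + 2)) → Prop := fun σ =>
        ∀ (x : E) (m : Fin (k + 2) → E),
          iteratedFDeriv ℝ (k + 2) f x (m ∘ σ) = iteratedFDeriv ℝ (k + 2) f x m with hP
      have hmul : ∀ σ τ, P σ → P τ → P (σ * τ) := by
        intro σ τ hσ hτ x m
        have hcomp : m ∘ ⇑(σ * τ) = (m ∘ σ) ∘ τ := rfl
        rw [hcomp, hτ, hσ]
      have hfix : ∀ σ : Equiv.Perm (Fin (k + 2)), σ 0 = 0 → P σ := by
        intro σ h0 x m
        set σ' := (Equiv.Perm.decomposeFin σ).2 with hσ'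
        have hd : σ = Equiv.Perm.decomposeFin.symm (0, σ') := by
          have h1 : (Equiv.Perm.decomposeFin σ).1 = σ 0 := by
            conv_rhs => rw [← Equiv.Perm.decomposeFin.symm_apply_apply σ]
            rw [show Equiv.Perm.decomposeFin σ
              = ((Equiv.Perm.decomposeFin σ).1, (Equiv.Perm.decomposeFin σ).2) from rfl,
              Equiv.Perm.decomposeFin_symm_apply_zero]
          rw [← h0, ← h1]
          exact (Equiv.Perm.decomposeFin.symm_apply_apply σ).symm
        have hsucc : ∀ i : Fin (k + 1), σ i.succ = (σ' i).succ := by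
          intro i
          conv_lhs => rw [hd]
          rw [Equiv.Perm.decomposeFin_symm_apply_succ]
          simp
        exact itfd_tail_perm k σ σ' h0 hsucc
          (fun y w => IH _ y w) hdiff x m
      have hswap01 : P (Equiv.swap 0 1) := fun x m => itfd_swap01 hf k x m
      have hswap : ∀ p : Fin (k + 2), P (Equiv.swap 0 p) := by
        intro p
        rcases eq_or_ne p 0 with rfl | hp0
        · intro x m
          rw [Equiv.swap_self]
          congr 1
        rcases eq_or_ne p 1 with rfl | hp1
        · exact hswap01
        · have hid : Equiv.swap (0 : Fin (k + 2)) p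
              = (Equiv.swap 1 p) * (Equiv.swap 0 1) * (Equiv.swap 1 p)⁻¹ := by
            rw [← Equiv.swap_apply_apply]
            rw [Equiv.swap_apply_of_ne_of_ne (by simp [eq_comm]) (fun h => hp0 h.symm),
              Equiv.swap_apply_left]
          have hfix1 : (Equiv.swap (1 : Fin (k + 2)) p) 0 = 0 :=
            Equiv.swap_apply_of_ne_of_ne (by simp [eq_comm]) (fun h => hp0 h.symm)
          rw [hid, Equiv.swap_inv]
          exact hmul _ _ (hmul _ _ (hfix _ hfix1) hswap01) (hfix _ hfix1)
      intro σ x m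
      have hτ0 : ((Equiv.swap 0 (σ 0)) * σ) 0 = 0 := by
        simp [Equiv.Perm.mul_apply, Equiv.swap_apply_right]
      have hσeq : σ = (Equiv.swap 0 (σ 0)) * ((Equiv.swap 0 (σ 0)) * σ) := by
        rw [← mul_assoc, Equiv.swap_mul_self, one_mul]
      rw [hσeq]
      exact hmul _ _ (hswap _) (hfix _ hτ0) x m

lemma zeta1_eq : zeta1 = fun t => expNegInvGlue (1 - 4 * t ^ 2) / mollK := by
  funext t
  rw [zeta1, expNegInvGlue]
  rcases lt_or_ge |t| (1/2) with h | h
  · rw [if_pos h, if_neg (by nlinarith [sq_abs t, abs_nonneg t])]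
  · rw [if_neg (not_lt.mpr h), if_pos (by nlinarith [sq_abs t, abs_nonneg t]), zero_div]

lemma zeta1_contDiff : ContDiff ℝ (⊤ : ℕ∞) zeta1 := by
  rw [zeta1_eq]
  exact (expNegInvGlue.contDiff.comp
    (contDiff_const.sub (contDiff_const.mul (contDiff_id.pow 2)))).div_const _

lemma zeta1_zero {t : ℝ} (h : ¬ |t| < 1/2) : zeta1 t = 0 := if_neg h

lemma zetaD_zero (d : ℕ) {x : Fin d → ℝ} {j : Fin d} (h : ¬ |x j| < 1/2) : zetaD d x = 0 :=
  Finset.prod_eq_zero (Finset.mem_univ j) (zeta1_zero h)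

lemma zetaD_contDiff (d : ℕ) : ContDiff ℝ (⊤ : ℕ∞) (zetaD d) := by
  unfold zetaD
  exact contDiff_prod fun j _ => zeta1_contDiff.comp (contDiff_apply ℝ ℝ j)

lemma zetaD_hcs (d : ℕ) : HasCompactSupport (zetaD d) := by
  apply HasCompactSupport.intro (K := Set.univ.pi fun _ : Fin d => Set.Icc (-(1/2) : ℝ) (1/2))
    (isCompact_univ_pi fun _ => isCompact_Icc)
  intro x hx
  simp only [Set.mem_pi, Set.mem_univ, Set.mem_Icc, forall_true_left, not_forall] at hx
  obtain ⟨j, hj⟩ := hx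
  refine zetaD_zero d (j := j) fun habs => ?_
  rcases abs_lt.mp habs with ⟨h1, h2⟩
  exact hj ⟨le_of_lt h1, le_of_lt h2⟩

lemma zetaScaled_one (d : ℕ) : zetaScaled d 1 = zetaD d := by
  funext x
  rw [zetaScaled]
  simp [div_one]

lemma patchCore_meas (d : ℕ) (σ : ℝ) (i : Fin d → ℤ) : MeasurableSet (patchCore d σ i) :=
  MeasurableSet.univ_pi fun _ => measurableSet_Ioo

lemma pufun_eq_conv (d : ℕ) (i : Fin d → ℤ) :
    pufun d 1 i = MeasureTheory.convolution
      ((patchCore d 1 i).indicator fun _ => (1 : ℝ)) (zetaD d)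
      (ContinuousLinearMap.lsmul ℝ ℝ) volume := by
  funext x
  rw [pufun, MeasureTheory.convolution,
    ← MeasureTheory.integral_indicator (patchCore_meas d 1 i)]
  congr 1
  funext t
  by_cases ht : t ∈ patchCore d 1 i
  · simp [Set.indicator_of_mem ht, zetaScaled_one]
  · simp [Set.indicator_of_notMem ht]

lemma pufun_contDiff (d : ℕ) (i : Fin d → ℤ) : ContDiff ℝ (⊤ : ℕ∞) (pufun d 1 i) := by
  rw [pufun_eq_conv]
  exact (zetaD_hcs d).contDiff_convolution_right _
    ((MeasureTheory.locallyIntegrable_const (1 : ℝ)).indicator (patchCore_meas d 1 i))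
    (zetaD_contDiff d)

lemma pufun_zero (d : ℕ) (i : Fin d → ℤ) (x : Fin d → ℝ) (j : Fin d)
    (h : 1 ≤ |x j - (i j : ℝ)|) : pufun d 1 i x = 0 := by
  rw [pufun]
  apply MeasureTheory.setIntegral_eq_zero_of_forall_eq_zero
  intro y hy
  have hyj := hy j (Set.mem_univ j)
  simp only [Set.mem_Ioo, mul_one] at hyj
  rw [zetaScaled_one]
  apply zetaD_zero d (j := j)
  have hxy : (x - y) j = x j - y j := rfl
  rw [hxy, not_lt]
  have h1 : |x j - (i j : ℝ)| ≤ |x j - y j| + |y j - (i j : ℝ)| := abs_sub_le _ _ _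
  have h2 : |y j - (i j : ℝ)| ≤ 1/2 := by
    rw [abs_le]
    constructor <;> linarith [hyj.1, hyj.2]
  linarith


lemma pufemFun_contDiff (d P : ℕ) (c : (Fin d → ℤ) → (Fin d → ℕ) → ℝ) :
    ContDiff ℝ (⊤ : ℕ∞) (pufemFun d P 1 c) := by
  rw [contDiff_iff_contDiffAt]
  intro x₀
  set term : (Fin d → ℤ) → (Fin d → ℝ) → ℝ := fun i x => pufun d 1 i x *
    ∑ n ∈ Finset.range (P + 1), ∑ α ∈ Finset.Nat.antidiagonalTuple d n,
      c i α * ∏ j, ((x j - (i j : ℝ) * 1) / 1) ^ α j with hterm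
  set U : Set (Fin d → ℝ) := Set.univ.pi fun j => Set.Ioo (x₀ j - 1) (x₀ j + 1) with hU
  set Fs : Finset (Fin d → ℤ) :=
    Fintype.piFinset fun j => Finset.Icc (⌈x₀ j⌉ - 2) (⌊x₀ j⌋ + 2) with hFs
  have hUnhds : U ∈ nhds x₀ := by
    refine (isOpen_set_pi Set.finite_univ fun j _ => isOpen_Ioo).mem_nhds ?_
    intro j _
    constructor <;> simp <;> linarith
  have hkill : ∀ i ∉ Fs, ∀ x ∈ U, term i x = 0 := by
    intro i hi x hx
    rw [Fintype.mem_piFinset] at hi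
    push_neg at hi
    obtain ⟨j, hj⟩ := hi
    rw [Finset.mem_Icc] at hj
    push_neg at hj
    have hxj := hx j (Set.mem_univ j)
    rw [Set.mem_Ioo] at hxj
    have habs : 1 ≤ |x j - (i j : ℝ)| := by
      rcases lt_or_ge (i j) (⌈x₀ j⌉ - 2) with hcase | hcase
      · have : (i j : ℝ) ≤ (⌈x₀ j⌉ : ℝ) - 3 := by
          have : i j ≤ ⌈x₀ j⌉ - 3 := by omega
          exact_mod_cast this
        have hceil : (⌈x₀ j⌉ : ℝ) < x₀ j + 1 := Int.ceil_lt_add_one _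
        refine le_abs.mpr (Or.inl ?_)
        linarith [hxj.1]
      · have hge := hj hcase
        have : (⌊x₀ j⌋ : ℝ) + 3 ≤ (i j : ℝ) := by
          have : ⌊x₀ j⌋ + 3 ≤ i j := by omega
          exact_mod_cast this
        have hfloor : x₀ j - 1 < (⌊x₀ j⌋ : ℝ) := Int.sub_one_lt_floor _
        refine le_abs.mpr (Or.inr ?_)
        have : x j < x₀ j + 1 := hxj.2
        linarith
    rw [hterm]
    simp only
    rw [pufun_zero d i x j habs, zero_mul]
  have hsum : ContDiff ℝ (⊤ : ℕ∞) fun x => ∑ i ∈ Fs, term i x := by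
    apply ContDiff.sum
    intro i _
    apply (pufun_contDiff d i).mul
    apply ContDiff.sum; intro n _
    apply ContDiff.sum; intro α _
    apply contDiff_const.mul
    apply contDiff_prod
    intro j _
    exact (((contDiff_apply ℝ ℝ j).sub contDiff_const).div_const _).pow _
  have heq : pufemFun d P 1 c =ᶠ[nhds x₀] fun x => ∑ i ∈ Fs, term i x := by
    filter_upwards [hUnhds] with x hx
    exact tsum_eq_sum fun i hi => hkill i hi x hx
  exact hsum.contDiffAt.congr_of_eventuallyEq heq


lemma itfd_zero_local {E F : Type*} [NormedAddCommGroup E] [NormedSpace ℝ E]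
    [NormedAddCommGroup F] [NormedSpace ℝ F] {g : E → F} {y : E}
    (h : g =ᶠ[nhds y] fun _ => 0) (k : ℕ) : iteratedFDeriv ℝ k g y = 0 := by
  have h' : g =ᶠ[nhdsWithin y Set.univ] fun _ => (0 : F) := h.filter_mono nhdsWithin_le_nhds
  have heq := h'.iteratedFDerivWithin_eq (𝕜 := ℝ) (h.self_of_nhds) k
  rw [iteratedFDerivWithin_univ, iteratedFDerivWithin_univ] at heq
  rw [heq, iteratedFDeriv_zero_fun]
  rfl

lemma itfd_cast {E F : Type*} [NormedAddCommGroup E] [NormedSpace ℝ E]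
    [NormedAddCommGroup F] [NormedSpace ℝ F] {n N : ℕ} (h : n = N) (f : E → F) (x : E)
    (t : Fin N → E) :
    iteratedFDeriv ℝ N f x t = iteratedFDeriv ℝ n f x (t ∘ finCongr h) := by
  subst h
  congr 1

lemma fiber_equiv_card {d N : ℕ} (α : Fin d → ℕ) (E1 : ((j : Fin d) × Fin (α j)) ≃ Fin N)
    (j : Fin d) :
    (Finset.univ.filter fun m : Fin N => (E1.symm m).1 = j).card = α j := by
  rw [← Fintype.card_subtype]
  have e1 : {m : Fin N // (E1.symm m).1 = j} ≃ {s : (j' : Fin d) × Fin (α j') // s.1 = j} :=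
    Equiv.subtypeEquiv E1.symm fun m => Iff.rfl
  have e2 : {s : (j' : Fin d) × Fin (α j') // s.1 = j} ≃ Fin (α j) :=
    { toFun := fun p => finCongr (congrArg α p.2) p.1.2
      invFun := fun v => ⟨⟨j, v⟩, rfl⟩
      left_inv := by rintro ⟨⟨j', v⟩, rfl⟩; rfl
      right_inv := fun v => rfl }
  rw [Fintype.card_congr (e1.trans e2), Fintype.card_fin]

lemma exists_comp_perm {N d : ℕ} (r r' : Fin N → Fin d)
    (h : ∀ j, (Finset.univ.filter fun s => r s = j).card
            = (Finset.univ.filter fun s => r' s = j).card) :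
    ∃ π : Equiv.Perm (Fin N), ∀ s, r' (π s) = r s := by
  have e : ∀ j, {s // r s = j} ≃ {s // r' s = j} := fun j =>
    Fintype.equivOfCardEq (by rw [Fintype.card_subtype, Fintype.card_subtype, h j])
  refine ⟨(Equiv.sigmaFiberEquiv r).symm.trans
    ((Equiv.sigmaCongrRight e).trans (Equiv.sigmaFiberEquiv r')), fun s => ?_⟩
  exact (e (r s) ⟨s, rfl⟩).2


end PufemAux

/-- definiteness of the stabilized norm on a reference configuration. -/
theorem stabilized_norm_definite (d P : ℕ) (hd : 1 ≤ d) (z : Fin d → ℤ)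
    (hz : ∀ j, z j = -1 ∨ z j = 0 ∨ z j = 1) (hz0 : z ≠ 0)
    (v : (Fin d → ℝ) → ℝ) (hv : memPufem d P 1 v)
    (hzero : ∀ x ∈ element d 1 z, v x = 0)
    (hderiv : ∀ α : Fin d → ℕ, (∑ j, α j) = P + 1 →
      ∀ x ∈ element d 1 (0 : Fin d → ℤ), pdiff d α v x = 0) :
    ∀ x ∈ element d 1 (0 : Fin d → ℤ), v x = 0 := by
  obtain ⟨c, hc⟩ := hv
  have hsm : ContDiff ℝ (⊤ : ℕ∞) v := hc ▸ PufemAux.pufemFun_contDiff d P c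
  clear hc
  intro x hx
  set Q : Set (Fin d → ℝ) := element d 1 (0 : Fin d → ℤ) with hQ
  set Q' : Set (Fin d → ℝ) := element d 1 z with hQ'
  have hQeq : Q = Set.univ.pi fun _ : Fin d => Set.Ioo (0 : ℝ) 1 := by
    rw [hQ, element]
    congr 1
    funext j
    norm_num
  have hQopen : IsOpen Q := by
    rw [hQeq]; exact isOpen_set_pi Set.finite_univ fun _ _ => isOpen_Ioo
  have hQ'open : IsOpen Q' := by
    rw [hQ', element]; exact isOpen_set_pi Set.finite_univ fun _ _ => isOpen_Ioo
  have hQconv : Convex ℝ Q := by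
    rw [hQeq]; exact convex_pi fun _ _ => convex_Ioo _ _
  set cpt : Fin d → ℝ := fun j => if z j = 1 then 1 else 0 with hcpt
  have hcQ : cpt ∈ closure Q := by
    rw [hQeq, closure_pi_set]
    intro j _
    show cpt j ∈ closure (Set.Ioo (0:ℝ) 1)
    rw [closure_Ioo (by norm_num : (0:ℝ) ≠ 1)]
    simp only [hcpt]
    split_ifs <;> norm_num
  have hcQ' : cpt ∈ closure Q' := by
    rw [hQ', element, closure_pi_set]
    intro j _
    show cpt j ∈ closure (Set.Ioo ((z j : ℝ) * 1) (((z j : ℝ) + 1) * 1))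
    rw [closure_Ioo (by intro hh; rw [mul_one, mul_one] at hh; linarith :
      ((z j : ℝ)) * 1 ≠ ((z j : ℝ) + 1) * 1)]
    simp only [hcpt]
    rcases hz j with h | h | h <;> simp [h] <;> norm_num
  -- all derivatives of v vanish at cpt
  have hc0 : ∀ k, iteratedFDeriv ℝ k v cpt = 0 := by
    intro k
    have hQ'zero : ∀ y ∈ Q', iteratedFDeriv ℝ k v y = 0 := fun y hy =>
      PufemAux.itfd_zero_local
        (Filter.eventuallyEq_of_mem (hQ'open.mem_nhds hy) fun p hp => hzero p hp) k
    have hcl : IsClosed {y : Fin d → ℝ | iteratedFDeriv ℝ k v y = 0} :=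
      isClosed_eq (PufemAux.itfd_contDiff hsm k).continuous continuous_const
    exact hcl.closure_subset_iff.mpr (fun y hy => hQ'zero y hy) hcQ'
  -- base case: the (P+1)-st derivative vanishes on Q
  have hbasis : ∀ y ∈ Q, ∀ r : Fin (P + 1) → Fin d,
      iteratedFDeriv ℝ (P + 1) v y (fun s => (Pi.single (r s) (1 : ℝ) : Fin d → ℝ)) = 0 := by
    intro y hy r
    set α : Fin d → ℕ := fun j => (Finset.univ.filter fun s => r s = j).card with hα
    have hαsum : (∑ j, α j) = P + 1 := by
      rw [hα]
      have hcf := Finset.card_eq_sum_card_fiberwise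
        (f := r) (s := Finset.univ) (t := Finset.univ) (fun s _ => Finset.mem_univ (r s))
      simp only [Finset.card_univ, Fintype.card_fin] at hcf
      exact hcf.symm
    have hp := hderiv α hαsum y hy
    rw [pdiff] at hp
    set E0 := Fintype.equivFinOfCardEq
      (by simp : Fintype.card ((j : Fin d) × Fin (α j)) = ∑ j, α j) with hE0
    set r' : Fin (P + 1) → Fin d := fun m => (E0.symm (finCongr hαsum.symm m)).1 with hr'
    have hmain : iteratedFDeriv ℝ (P + 1) v y (fun m => (Pi.single (r' m) (1 : ℝ) : Fin d → ℝ)) = 0 := by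
      rw [PufemAux.itfd_cast hαsum]
      have hcomp : ((fun m => ((Pi.single (r' m) (1 : ℝ) : Fin d → ℝ) : Fin d → ℝ)) ∘ finCongr hαsum)
          = fun m => (Pi.single ((E0.symm m).1) (1 : ℝ) : Fin d → ℝ) := by
        funext m
        simp only [Function.comp_apply, hr']
        have hmm : finCongr hαsum.symm (finCongr hαsum m) = m := Fin.ext (by simp)
        rw [hmm]
      rw [hcomp]
      exact hp
    have hfib : ∀ j, (Finset.univ.filter fun m => r' m = j).card = α j := by
      intro j
      have hfe := PufemAux.fiber_equiv_card α (E0.trans (finCongr hαsum)) j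
      have hpred : ∀ m : Fin (P + 1), ((E0.trans (finCongr hαsum)).symm m).1 = (r' m : Fin d) := by
        intro m
        rw [hr', Equiv.symm_trans_apply, finCongr_symm]
      have hfilt : (Finset.univ.filter fun m : Fin (P + 1) => r' m = j)
          = (Finset.univ.filter fun m => ((E0.trans (finCongr hαsum)).symm m).1 = j) := by
        apply Finset.filter_congr
        intro m _
        rw [hpred m]
      rw [hfilt, hfe]
    obtain ⟨π, hπ⟩ := PufemAux.exists_comp_perm r r' fun j => (hfib j).symm
    have hrw : (fun s => (Pi.single (r s) (1 : ℝ) : Fin d → ℝ)) = (fun m => (Pi.single (r' m) (1 : ℝ) : Fin d → ℝ)) ∘ π := by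
      funext s
      rw [Function.comp_apply, hπ s]
    rw [hrw, PufemAux.itfd_perm hsm (P + 1) π y _, hmain]
  have hbase : ∀ y ∈ Q, iteratedFDeriv ℝ (P + 1) v y = 0 := by
    intro y hy
    refine ContinuousMultilinearMap.ext fun t => ?_
    rw [ContinuousMultilinearMap.zero_apply]
    have ht : (t : Fin (P + 1) → (Fin d → ℝ)) = fun s => ∑ j, t s j • (Pi.single j (1 : ℝ) : Fin d → ℝ) := by
      funext s
      have h1 : (∑ j, t s j • ((Pi.single j (1 : ℝ) : Fin d → ℝ)))
          = ∑ i, t s i • fun j' => if i = j' then (1 : ℝ) else 0 := by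
        refine Finset.sum_congr rfl fun i _ => ?_
        congr 1
        funext j'
        simp [Pi.single_apply, eq_comm]
      rw [h1, ← pi_eq_sum_univ (t s)]
    conv_lhs => rw [ht]
    have hms := (iteratedFDeriv ℝ (P + 1) v y).toMultilinearMap.map_sum
      (g := fun (s : Fin (P + 1)) (j : Fin d) => t s j • (Pi.single j (1 : ℝ) : Fin d → ℝ))
    simp only [ContinuousMultilinearMap.coe_coe] at hms
    rw [hms]
    refine Finset.sum_eq_zero fun r _ => ?_
    have hsm2 := (iteratedFDeriv ℝ (P + 1) v y).toMultilinearMap.map_smul_univ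
      (fun s => t s (r s)) (fun s => (Pi.single (r s) (1 : ℝ) : Fin d → ℝ))
    simp only [ContinuousMultilinearMap.coe_coe] at hsm2
    rw [hsm2, hbasis y hy r, smul_zero]
  -- downward induction
  have hdown : ∀ m : ℕ, ∀ y ∈ Q, iteratedFDeriv ℝ (P + 1 - m) v y = 0 := by
    intro m
    induction m with
    | zero => simpa using hbase
    | succ m IH =>
      rcases le_or_gt (P + 1) m with hm | hm
      · have h1 : P + 1 - (m + 1) = P + 1 - m := by omega
        rw [h1]; exact IH
      · set k := P + 1 - (m + 1) with hk
        have hk1 : k + 1 = P + 1 - m := by omega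
        intro y hy
        refine ContinuousMultilinearMap.ext fun t => ?_
        rw [ContinuousMultilinearMap.zero_apply]
        set g := iteratedFDeriv ℝ k v with hg
        have hgdiff : Differentiable ℝ g :=
          (PufemAux.itfd_contDiff hsm k).differentiable (by simp)
        set A := ContinuousMultilinearMap.apply ℝ (fun _ : Fin k => (Fin d → ℝ)) ℝ t with hA
        set Ffun : (Fin d → ℝ) → ℝ := ⇑A ∘ g with hFfun
        have hFdiff : Differentiable ℝ Ffun := A.differentiable.comp hgdiff
        have hzeroQ : ∀ p ∈ Q, fderiv ℝ Ffun p = 0 := by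
          intro p hp
          rw [(A.hasFDerivAt.comp p (hgdiff p).hasFDerivAt).fderiv]
          ext w
          have hIH := IH p hp
          rw [← hk1] at hIH
          have hcons : (fderiv ℝ g p w) t = iteratedFDeriv ℝ (k + 1) v p (Fin.cons w t) := by
            rw [iteratedFDeriv_succ_apply_left, Fin.cons_zero, Fin.tail_cons]
          simp only [ContinuousLinearMap.coe_comp', Function.comp_apply,
            ContinuousMultilinearMap.apply_apply, ContinuousLinearMap.zero_apply]
          have hAev : A ((fderiv ℝ g p) w) = ((fderiv ℝ g p) w) t := rfl
          rw [hAev, hcons, hIH]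
          rfl
        have hFcont : Continuous Ffun := A.continuous.comp hgdiff.continuous
        have hclosed : IsClosed {p : Fin d → ℝ | Ffun p = Ffun y} :=
          isClosed_eq hFcont continuous_const
        have hsub : Q ⊆ {p : Fin d → ℝ | Ffun p = Ffun y} := by
          intro p hp
          exact hQconv.is_const_of_fderivWithin_eq_zero hFdiff.differentiableOn
            (fun q hq => by
              rw [fderivWithin_of_isOpen hQopen hq]; exact hzeroQ q hq) hp hy
        have hcpteq : Ffun cpt = Ffun y := hclosed.closure_subset_iff.mpr hsub hcQ
        have hcpt0 : Ffun cpt = 0 := by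
          show A (iteratedFDeriv ℝ k v cpt) = 0
          rw [hc0 k]
          rfl
        show g y t = 0
        have hy0 : Ffun y = 0 := by rw [← hcpteq, hcpt0]
        exact hy0
  have h0 := hdown (P + 1) x hx
  have hPP : P + 1 - (P + 1) = 0 := by omega
  rw [hPP] at h0
  have hfin : v x = iteratedFDeriv ℝ 0 v x fun i => i.elim0 :=
    (iteratedFDeriv_zero_apply _).symm
  rw [hfin, h0]
  rfl

end
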